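/- For a structural imset u over V defined as k·u = ∑_j u_{⟨a_j, b_j | C_j⟩} (k a positive integer, finite list of elementary imsets), and its characteristic imset c(S) = 1 − ∑_{T ⊇ S} u(T): c(S) = 1 − k^{−1}·|{ j : {a_j, b_j} ⊆ S ⊆ {a_j, b_j} ∪ C_j }| as rational numbers. In particular, if k = 1 and the constrained-set families {S : {a_j,b_j} ⊆ S ⊆ {a_j,b_j}∪C_j} are pairwise disjoint over j, then c takes values in {0,1}. -/
import Mathlib


open Finset

/-- Identifier imset. -/
def deltaI {V : Type*} [DecidableEq V] (A B : Finset V) : ℤ :=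
  if B = A then 1 else 0

/-- Elementary imset `u_{⟨a,b|C⟩}`. -/
def elemImset {V : Type*} [DecidableEq V] (a b : V) (C S : Finset V) : ℤ :=
  deltaI ({a, b} ∪ C) S - deltaI (insert a C) S - deltaI (insert b C) S + deltaI C S

lemma sumDelta {V : Type*} [Fintype V] [DecidableEq V] (A S : Finset V) :
    (∑ T : Finset V, if S ⊆ T then deltaI A T else 0) = if S ⊆ A then 1 else 0 := by
  have h : ∀ T : Finset V,
      (if S ⊆ T then deltaI A T else 0) = if T = A then (if S ⊆ A then 1 else 0) else 0 := by
    intro T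
    unfold deltaI
    split_ifs with h1 h2 h3 <;> simp_all
  rw [Finset.sum_congr rfl (fun T _ => h T)]
  simp [Finset.sum_ite_eq']

lemma sumElem {V : Type*} [Fintype V] [DecidableEq V] (a b : V) (C S : Finset V)
    (hab : a ≠ b) (haC : a ∉ C) (hbC : b ∉ C) :
    (∑ T : Finset V, if S ⊆ T then elemImset a b C T else 0)
      = if {a, b} ⊆ S ∧ S ⊆ {a, b} ∪ C then 1 else 0 := by
  have h : ∀ T : Finset V,
      (if S ⊆ T then elemImset a b C T else 0)
        = (if S ⊆ T then deltaI ({a, b} ∪ C) T else 0)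
          - (if S ⊆ T then deltaI (insert a C) T else 0)
          - (if S ⊆ T then deltaI (insert b C) T else 0)
          + (if S ⊆ T then deltaI C T else 0) := by
    intro T; unfold elemImset; split_ifs <;> ring
  rw [Finset.sum_congr rfl (fun T _ => h T), Finset.sum_add_distrib, Finset.sum_sub_distrib,
    Finset.sum_sub_distrib, sumDelta, sumDelta, sumDelta, sumDelta]
  have hac : ({a, b} : Finset V) ∪ C = insert a (insert b C) := by
    ext x; simp [or_assoc]
  by_cases h1 : S ⊆ {a, b} ∪ C
  · by_cases h2 : a ∈ S
    · by_cases h3 : b ∈ S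
      · -- case a ∈ S, b ∈ S : 1 - 0 - 0 + 0 = 1
        have hna : ¬ S ⊆ insert a C := fun hs => by
          have := hs h3; simp at this
          rcases this with h | h
          · exact hab h.symm
          · exact hbC h
        have hnb : ¬ S ⊆ insert b C := fun hs => by
          have := hs h2; simp at this
          rcases this with h | h
          · exact hab h
          · exact haC h
        have hnc : ¬ S ⊆ C := fun hs => haC (hs h2)
        have habS : ({a, b} : Finset V) ⊆ S := by
          intro x hx; simp at hx; rcases hx with h | h
          · exact h ▸ h2
          · exact h ▸ h3
        rw [if_pos h1, if_neg hna, if_neg hnb, if_neg hnc, if_pos ⟨habS, h1⟩]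
        ring
      · -- case a ∈ S, b ∉ S : 1 - 1 - 0 + 0 = 0
        have hsa : S ⊆ insert a C := by
          intro x hx
          have := h1 hx; rw [hac] at this; simp at this
          rcases this with h | h | h
          · simp [h]
          · exact absurd (h ▸ hx) h3
          · simp [h]
        have hnb : ¬ S ⊆ insert b C := fun hs => by
          have := hs h2; simp at this
          rcases this with h | h
          · exact hab h
          · exact haC h
        have hnc : ¬ S ⊆ C := fun hs => haC (hs h2)
        have hcond : ¬ (({a, b} : Finset V) ⊆ S ∧ S ⊆ {a, b} ∪ C) := fun hcd =>
          h3 (hcd.1 (by simp))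
        rw [if_pos h1, if_pos hsa, if_neg hnb, if_neg hnc, if_neg hcond]
        ring
    · by_cases h3 : b ∈ S
      · -- case a ∉ S, b ∈ S : 1 - 0 - 1 + 0 = 0
        have hsb : S ⊆ insert b C := by
          intro x hx
          have := h1 hx; rw [hac] at this; simp at this
          rcases this with h | h | h
          · exact absurd (h ▸ hx) h2
          · simp [h]
          · simp [h]
        have hna : ¬ S ⊆ insert a C := fun hs => by
          have := hs h3; simp at this
          rcases this with h | h
          · exact hab h.symm
          · exact hbC h
        have hnc : ¬ S ⊆ C := fun hs => hbC (hs h3)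
        have hcond : ¬ (({a, b} : Finset V) ⊆ S ∧ S ⊆ {a, b} ∪ C) := fun hcd =>
          h2 (hcd.1 (by simp))
        rw [if_pos h1, if_neg hna, if_pos hsb, if_neg hnc, if_neg hcond]
        ring
      · -- case a ∉ S, b ∉ S : 1 - 1 - 1 + 1 = 0
        have hsc : S ⊆ C := by
          intro x hx
          have := h1 hx; rw [hac] at this; simp at this
          rcases this with h | h | h
          · exact absurd (h ▸ hx) h2
          · exact absurd (h ▸ hx) h3
          · exact h
        have hsa : S ⊆ insert a C := hsc.trans (Finset.subset_insert _ _)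
        have hsb : S ⊆ insert b C := hsc.trans (Finset.subset_insert _ _)
        have hcond : ¬ (({a, b} : Finset V) ⊆ S ∧ S ⊆ {a, b} ∪ C) := fun hcd =>
          h2 (hcd.1 (by simp))
        rw [if_pos h1, if_pos hsa, if_pos hsb, if_pos hsc, if_neg hcond]
        ring
  · -- S not a subset of {a,b} ∪ C : everything 0
    have hia : insert a C ⊆ {a, b} ∪ C := by
      rw [hac]; exact Finset.insert_subset_insert _ (Finset.subset_insert _ _)
    have hib : insert b C ⊆ {a, b} ∪ C := by
      rw [hac]
      intro x hx; simp at hx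
      rcases hx with h | h <;> simp [h]
    have hna : ¬ S ⊆ insert a C := fun hs => h1 (hs.trans hia)
    have hnb : ¬ S ⊆ insert b C := fun hs => h1 (hs.trans hib)
    have hnc : ¬ S ⊆ C := fun hs => h1 (hs.trans Finset.subset_union_right)
    have hcond : ¬ (({a, b} : Finset V) ⊆ S ∧ S ⊆ {a, b} ∪ C) := fun hcd => h1 hcd.2
    rw [if_neg h1, if_neg hna, if_neg hnb, if_neg hnc, if_neg hcond]
    ring

theorem stmt11 {V : Type*} [Fintype V] [DecidableEq V]
    (u c : Finset V → ℤ) (k m : ℕ) (hk : 0 < k)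
    (a b : Fin m → V) (C : Fin m → Finset V)
    (hab : ∀ j, a j ≠ b j) (haC : ∀ j, a j ∉ C j) (hbC : ∀ j, b j ∉ C j)
    (hstruct : ∀ S : Finset V, (k : ℤ) * u S = ∑ j, elemImset (a j) (b j) (C j) S)
    (hc : ∀ S : Finset V, c S = 1 - ∑ T : Finset V, if S ⊆ T then u T else 0) :
    (∀ S : Finset V,
        (c S : ℚ)
          = 1 - ((Finset.univ.filter
              (fun j : Fin m => {a j, b j} ⊆ S ∧ S ⊆ {a j, b j} ∪ C j)).card : ℚ) / k) ∧
      (k = 1 →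
        (∀ j j' : Fin m, j ≠ j' → ∀ S : Finset V,
          ¬ (({a j, b j} ⊆ S ∧ S ⊆ {a j, b j} ∪ C j) ∧
             ({a j', b j'} ⊆ S ∧ S ⊆ {a j', b j'} ∪ C j'))) →
        ∀ S : Finset V, c S = 0 ∨ c S = 1) := by
  have key : ∀ S : Finset V,
      (k : ℤ) * (∑ T : Finset V, if S ⊆ T then u T else 0)
        = ((Finset.univ.filter
            (fun j : Fin m => {a j, b j} ⊆ S ∧ S ⊆ {a j, b j} ∪ C j)).card : ℤ) := by
    intro S
    rw [Finset.mul_sum]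
    have h1 : ∀ T : Finset V,
        (k : ℤ) * (if S ⊆ T then u T else 0)
          = ∑ j, (if S ⊆ T then elemImset (a j) (b j) (C j) T else 0) := by
      intro T
      split_ifs with h
      · rw [hstruct]
      · simp
    rw [Finset.sum_congr rfl (fun T _ => h1 T), Finset.sum_comm]
    rw [Finset.sum_congr rfl
      (fun j _ => sumElem (a j) (b j) (C j) S (hab j) (haC j) (hbC j))]
    rw [Finset.sum_boole]
  constructor
  · intro S
    rw [hc S]
    have hkQ : (k : ℚ) ≠ 0 := by positivity
    have hq : (k : ℚ) * ((∑ T : Finset V, if S ⊆ T then u T else 0 : ℤ) : ℚ)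
        = ((Finset.univ.filter
            (fun j : Fin m => {a j, b j} ⊆ S ∧ S ⊆ {a j, b j} ∪ C j)).card : ℚ) := by
      exact_mod_cast congrArg (fun x : ℤ => (x : ℚ)) (key S)
    have hX : ((∑ T : Finset V, if S ⊆ T then u T else 0 : ℤ) : ℚ)
        = ((Finset.univ.filter
            (fun j : Fin m => {a j, b j} ⊆ S ∧ S ⊆ {a j, b j} ∪ C j)).card : ℚ) / k := by
      rw [eq_div_iff hkQ]
      linarith [hq]
    rw [Int.cast_sub, Int.cast_one, hX]
  · intro hk1 hdisj S
    set N := (Finset.univ.filter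
        (fun j : Fin m => {a j, b j} ⊆ S ∧ S ⊆ {a j, b j} ∪ C j)).card with hN
    have hcard : N ≤ 1 := by
      apply Finset.card_le_one.mpr
      intro j hj j' hj'
      simp only [Finset.mem_filter] at hj hj'
      by_contra hne
      exact hdisj j j' hne S ⟨hj.2, hj'.2⟩
    have hX : (∑ T : Finset V, if S ⊆ T then u T else 0) = (N : ℤ) := by
      have := key S
      rwa [hk1, Nat.cast_one, one_mul] at this
    rw [hc S, hX]
    rcases Nat.le_one_iff_eq_zero_or_eq_one.mp hcard with h | h <;> rw [h]
    · right; simp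
    · left; simp
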